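/- Let n ≥ 1 and let w_1 ≥ w_2 ≥ ... ≥ w_n be real numbers. Let p(x) = ∏_{k=1}^{n} (x - w_k) and let P be any real-polynomial antiderivative of p. Then there exists a real number c such that P(x) - c has all of its complex roots real if and only if P(w_j) ≥ P(w_k) for every pair of indices j, k ∈ {1, ..., n} with j even, k odd, and |j - k| ≥ 3. -/

import Mathlib

open Polynomial

/-- A real polynomial is hyperbolic if all of its complex roots are real. -/
def Hyperbolic (p : Polynomial ℝ) : Prop :=
  ∀ z ∈ (p.map (algebraMap ℝ ℂ)).roots, z.im = 0

private lemma neg_prod_sign (s : Multiset ℝ) (h : ∀ a ∈ s, a ≤ 0) :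
    0 ≤ (-1 : ℝ) ^ (Multiset.card s) * s.prod := by
  induction s using Multiset.induction with
  | empty => simp
  | cons a s ih =>
    have ha := h a (Multiset.mem_cons_self _ _)
    have ih' := ih fun b hb => h b (Multiset.mem_cons_of_mem hb)
    simp only [Multiset.card_cons, Multiset.prod_cons, pow_succ]
    nlinarith

private lemma filter_split_ge (s : Multiset ℝ) (a b : ℝ) (hab : a ≤ b) :
    s.filter (fun r => a ≤ r) =
      s.filter (fun r => b ≤ r) + s.filter (fun r => a ≤ r ∧ r < b) := by
  ext y
  rw [Multiset.count_add, Multiset.count_filter, Multiset.count_filter, Multiset.count_filter]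
  rcases le_or_gt b y with h1 | h1
  · rw [if_pos (hab.trans h1), if_pos h1, if_neg (fun hc => absurd h1 (not_le.mpr hc.2))]; omega
  · rw [if_neg (not_le.mpr h1)]
    rcases le_or_gt a y with h2 | h2
    · rw [if_pos h2, if_pos ⟨h2, h1⟩]; omega
    · rw [if_neg (not_le.mpr h2), if_neg (fun hc => absurd hc.1 (not_le.mpr h2))]

private lemma filter_split_gt (s : Multiset ℝ) (a b : ℝ) (hab : a < b) :
    s.filter (fun r => a < r) =
      s.filter (fun r => b < r) + s.filter (fun r => a < r ∧ r ≤ b) := by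
  ext y
  rw [Multiset.count_add, Multiset.count_filter, Multiset.count_filter, Multiset.count_filter]
  rcases lt_or_ge b y with h1 | h1
  · rw [if_pos (hab.trans h1), if_pos h1, if_neg (fun hc => absurd h1 (not_lt.mpr hc.2))]; omega
  · rw [if_neg (not_lt.mpr h1)]
    rcases lt_or_ge a y with h2 | h2
    · rw [if_pos h2, if_pos ⟨h2, h1⟩]; omega
    · rw [if_neg (not_lt.mpr h2), if_neg (fun hc => absurd hc.1 (not_lt.mpr h2))]

private lemma filter_split_lt (s : Multiset ℝ) (a b : ℝ) (hab : b < a) :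
    s.filter (fun r => r < a) =
      s.filter (fun r => r < b) + s.filter (fun r => b ≤ r ∧ r < a) := by
  ext y
  rw [Multiset.count_add, Multiset.count_filter, Multiset.count_filter, Multiset.count_filter]
  rcases lt_or_ge y b with h1 | h1
  · rw [if_pos (h1.trans hab), if_pos h1, if_neg (fun hc => absurd h1 (not_lt.mpr hc.1))]; omega
  · rw [if_neg (not_lt.mpr h1)]
    rcases lt_or_ge y a with h2 | h2
    · rw [if_pos h2, if_pos ⟨h1, h2⟩]; omega
    · rw [if_neg (not_lt.mpr h2), if_neg (fun hc => absurd hc.2 (not_lt.mpr h2))]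

/-- Counting form of Rolle's theorem: the number of roots of `q` in `(x, ∞)`, with
multiplicity, is at most one more than the number of roots of `q'` there; moreover if
`x` itself is a root of `q` we can drop the "one more". -/
private lemma rolle_count (d : ℕ) :
    ∀ (q : Polynomial ℝ) (x : ℝ), q ≠ 0 →
      Multiset.card (q.roots.filter (fun r => x < r)) = d →
      (d ≤ Multiset.card ((derivative q).roots.filter (fun r => x < r)) + 1 ∧
       (q.IsRoot x → d ≤ Multiset.card ((derivative q).roots.filter (fun r => x < r)))) := by
  induction d using Nat.strong_induction_on with
  | _ d ih =>
  intro q x hq hd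
  rcases Nat.eq_zero_or_pos d with rfl | hdpos
  · exact ⟨Nat.zero_le _, fun _ => Nat.zero_le _⟩
  have hSpos : 0 < Multiset.card (q.roots.filter (fun r => x < r)) := hd ▸ hdpos
  obtain ⟨y0, hy0⟩ := Multiset.card_pos_iff_exists_mem.mp hSpos
  have hTne : (q.roots.filter (fun r => x < r)).toFinset.Nonempty :=
    ⟨y0, Multiset.mem_toFinset.mpr hy0⟩
  set ρ := (q.roots.filter (fun r => x < r)).toFinset.min' hTne with hρdef
  have hρS : ρ ∈ q.roots.filter (fun r => x < r) :=
    Multiset.mem_toFinset.mp (Finset.min'_mem _ hTne)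
  have hρroot : ρ ∈ q.roots := (Multiset.mem_filter.mp hρS).1
  have hxρ : x < ρ := (Multiset.mem_filter.mp hρS).2
  have hmin : ∀ y ∈ q.roots, x < y → ρ ≤ y := fun y hy hxy =>
    Finset.min'_le _ y (Multiset.mem_toFinset.mpr (Multiset.mem_filter.mpr ⟨hy, hxy⟩))
  set μ := q.roots.count ρ with hμdef
  have hμpos : 0 < μ := Multiset.count_pos.mpr hρroot
  have hρIsRoot : q.IsRoot ρ := (Polynomial.mem_roots hq).mp hρroot
  -- split identity for q
  have hsplitq := filter_split_gt q.roots x ρ hxρ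
  -- the middle part is exactly μ copies of ρ
  have hmidall : ∀ b ∈ q.roots.filter (fun r => x < r ∧ r ≤ ρ), b = ρ := by
    intro b hb
    obtain ⟨hb1, hb2, hb3⟩ := Multiset.mem_filter.mp hb
    exact le_antisymm hb3 (hmin b hb1 hb2)
  have hmidrep := Multiset.eq_replicate_card.mpr hmidall
  have hmidcount : (q.roots.filter (fun r => x < r ∧ r ≤ ρ)).count ρ = μ := by
    rw [Multiset.count_filter, if_pos ⟨hxρ, le_refl ρ⟩]
  have hmidcard : Multiset.card (q.roots.filter (fun r => x < r ∧ r ≤ ρ)) = μ := by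
    conv_lhs at hmidcount => rw [hmidrep]
    rwa [Multiset.count_replicate, if_pos rfl] at hmidcount
  set d₂ := Multiset.card (q.roots.filter (fun r => ρ < r)) with hd₂def
  have hdsum : d = d₂ + μ := by
    rw [← hd, hsplitq, Multiset.card_add, hmidcard]
  -- inductive hypothesis at ρ
  have hIH : d₂ ≤ Multiset.card ((derivative q).roots.filter (fun r => ρ < r)) :=
    ((ih d₂ (by omega) q ρ hq rfl).2) hρIsRoot
  -- count of ρ among roots of the derivative
  have hdercount : (derivative q).roots.count ρ = μ - 1 := by
    rw [Polynomial.count_roots, Polynomial.derivative_rootMultiplicity_of_root hρIsRoot,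
      ← Polynomial.count_roots, ← hμdef]
  -- split identity for q'
  have hsplitq' := filter_split_gt (derivative q).roots x ρ hxρ
  have hcards' : Multiset.card ((derivative q).roots.filter (fun r => x < r)) =
      Multiset.card ((derivative q).roots.filter (fun r => ρ < r)) +
      Multiset.card ((derivative q).roots.filter (fun r => x < r ∧ r ≤ ρ)) := by
    rw [hsplitq', Multiset.card_add]
  have hmid'count : ((derivative q).roots.filter (fun r => x < r ∧ r ≤ ρ)).count ρ = μ - 1 := by
    rw [Multiset.count_filter, if_pos ⟨hxρ, le_refl ρ⟩, hdercount]
  have hmid'card : μ - 1 ≤ Multiset.card ((derivative q).roots.filter (fun r => x < r ∧ r ≤ ρ)) :=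
    hmid'count ▸ Multiset.count_le_card _ _
  constructor
  · omega
  · intro hx
    -- Rolle between x and ρ
    have hq' : derivative q ≠ 0 := by
      intro h0
      have h1 := Polynomial.eq_C_of_natDegree_eq_zero
        (Polynomial.natDegree_eq_zero_of_derivative_eq_zero h0)
      apply hq
      have hc0 : q.coeff 0 = 0 := by
        have h2 := hx
        rw [Polynomial.IsRoot, h1] at h2
        simpa using h2
      rw [h1, hc0, map_zero]
    obtain ⟨θ, hθmem, hθ⟩ := exists_deriv_eq_zero (f := fun y => q.eval y) hxρ
      ((Polynomial.continuous q).continuousOn) (hx.trans hρIsRoot.symm)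
    rw [Polynomial.deriv] at hθ
    have hθroot : θ ∈ (derivative q).roots := (Polynomial.mem_roots hq').mpr hθ
    have hθmid : θ ∈ (derivative q).roots.filter (fun r => x < r ∧ r ≤ ρ) :=
      Multiset.mem_filter.mpr ⟨hθroot, hθmem.1, hθmem.2.le⟩
    -- the middle part contains (μ-1) copies of ρ and θ
    have hle : Multiset.replicate (μ - 1) ρ + {θ} ≤
        (derivative q).roots.filter (fun r => x < r ∧ r ≤ ρ) := by
      rw [Multiset.le_iff_count]
      intro y
      rw [Multiset.count_add, Multiset.count_replicate]
      by_cases hyρ : y = ρ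
      · subst hyρ
        rw [if_pos rfl, Multiset.count_singleton, if_neg (by exact fun h => absurd (h ▸ hθmem.2) (lt_irrefl _))]
        omega
      · rw [if_neg (fun h => hyρ h.symm), Multiset.count_singleton]
        by_cases hyθ : y = θ
        · subst hyθ
          rw [if_pos rfl]
          have := Multiset.count_pos.mpr hθmid
          omega
        · rw [if_neg hyθ]
          simp
    have hmidge : μ ≤ Multiset.card ((derivative q).roots.filter (fun r => x < r ∧ r ≤ ρ)) := by
      have := Multiset.card_le_card hle
      rw [Multiset.card_add, Multiset.card_replicate, Multiset.card_singleton] at this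
      omega
    omega
/-- Mirror version of `rolle_count` for the interval `(-∞, x)`. -/
private lemma rolle_count' (d : ℕ) :
    ∀ (q : Polynomial ℝ) (x : ℝ), q ≠ 0 →
      Multiset.card (q.roots.filter (fun r => r < x)) = d →
      (d ≤ Multiset.card ((derivative q).roots.filter (fun r => r < x)) + 1 ∧
       (q.IsRoot x → d ≤ Multiset.card ((derivative q).roots.filter (fun r => r < x)))) := by
  induction d using Nat.strong_induction_on with
  | _ d ih =>
  intro q x hq hd
  rcases Nat.eq_zero_or_pos d with rfl | hdpos
  · exact ⟨Nat.zero_le _, fun _ => Nat.zero_le _⟩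
  have hSpos : 0 < Multiset.card (q.roots.filter (fun r => r < x)) := hd ▸ hdpos
  obtain ⟨y0, hy0⟩ := Multiset.card_pos_iff_exists_mem.mp hSpos
  have hTne : (q.roots.filter (fun r => r < x)).toFinset.Nonempty :=
    ⟨y0, Multiset.mem_toFinset.mpr hy0⟩
  set ρ := (q.roots.filter (fun r => r < x)).toFinset.max' hTne with hρdef
  have hρS : ρ ∈ q.roots.filter (fun r => r < x) :=
    Multiset.mem_toFinset.mp (Finset.max'_mem _ hTne)
  have hρroot : ρ ∈ q.roots := (Multiset.mem_filter.mp hρS).1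
  have hxρ : ρ < x := (Multiset.mem_filter.mp hρS).2
  have hmax : ∀ y ∈ q.roots, y < x → y ≤ ρ := fun y hy hxy =>
    Finset.le_max' ((q.roots.filter (fun r => r < x)).toFinset) y (Multiset.mem_toFinset.mpr (Multiset.mem_filter.mpr ⟨hy, hxy⟩))
  set μ := q.roots.count ρ with hμdef
  have hμpos : 0 < μ := Multiset.count_pos.mpr hρroot
  have hρIsRoot : q.IsRoot ρ := (Polynomial.mem_roots hq).mp hρroot
  have hsplitq := filter_split_lt q.roots x ρ hxρ
  have hmidall : ∀ b ∈ q.roots.filter (fun r => ρ ≤ r ∧ r < x), b = ρ := by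
    intro b hb
    obtain ⟨hb1, hb2, hb3⟩ := Multiset.mem_filter.mp hb
    exact le_antisymm (hmax b hb1 hb3) hb2
  have hmidrep := Multiset.eq_replicate_card.mpr hmidall
  have hmidcount : (q.roots.filter (fun r => ρ ≤ r ∧ r < x)).count ρ = μ := by
    rw [Multiset.count_filter, if_pos ⟨le_refl ρ, hxρ⟩]
  have hmidcard : Multiset.card (q.roots.filter (fun r => ρ ≤ r ∧ r < x)) = μ := by
    conv_lhs at hmidcount => rw [hmidrep]
    rwa [Multiset.count_replicate, if_pos rfl] at hmidcount
  set d₂ := Multiset.card (q.roots.filter (fun r => r < ρ)) with hd₂def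
  have hdsum : d = d₂ + μ := by
    rw [← hd, hsplitq, Multiset.card_add, hmidcard]
  have hIH : d₂ ≤ Multiset.card ((derivative q).roots.filter (fun r => r < ρ)) :=
    ((ih d₂ (by omega) q ρ hq rfl).2) hρIsRoot
  have hdercount : (derivative q).roots.count ρ = μ - 1 := by
    rw [Polynomial.count_roots, Polynomial.derivative_rootMultiplicity_of_root hρIsRoot,
      ← Polynomial.count_roots, ← hμdef]
  have hsplitq' := filter_split_lt (derivative q).roots x ρ hxρ
  have hcards' : Multiset.card ((derivative q).roots.filter (fun r => r < x)) =
      Multiset.card ((derivative q).roots.filter (fun r => r < ρ)) +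
      Multiset.card ((derivative q).roots.filter (fun r => ρ ≤ r ∧ r < x)) := by
    rw [hsplitq', Multiset.card_add]
  have hmid'count : ((derivative q).roots.filter (fun r => ρ ≤ r ∧ r < x)).count ρ = μ - 1 := by
    rw [Multiset.count_filter, if_pos ⟨le_refl ρ, hxρ⟩, hdercount]
  have hmid'card : μ - 1 ≤
      Multiset.card ((derivative q).roots.filter (fun r => ρ ≤ r ∧ r < x)) :=
    hmid'count ▸ Multiset.count_le_card _ _
  constructor
  · omega
  · intro hx
    have hq' : derivative q ≠ 0 := by
      intro h0
      have h1 := Polynomial.eq_C_of_natDegree_eq_zero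
        (Polynomial.natDegree_eq_zero_of_derivative_eq_zero h0)
      apply hq
      have hc0 : q.coeff 0 = 0 := by
        have h2 := hx
        rw [Polynomial.IsRoot, h1] at h2
        simpa using h2
      rw [h1, hc0, map_zero]
    obtain ⟨θ, hθmem, hθ⟩ := exists_deriv_eq_zero (f := fun y => q.eval y) hxρ
      ((Polynomial.continuous q).continuousOn) (hρIsRoot.trans hx.symm)
    rw [Polynomial.deriv] at hθ
    have hθroot : θ ∈ (derivative q).roots := (Polynomial.mem_roots hq').mpr hθ
    have hθmid : θ ∈ (derivative q).roots.filter (fun r => ρ ≤ r ∧ r < x) :=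
      Multiset.mem_filter.mpr ⟨hθroot, hθmem.1.le, hθmem.2⟩
    have hle : Multiset.replicate (μ - 1) ρ + {θ} ≤
        (derivative q).roots.filter (fun r => ρ ≤ r ∧ r < x) := by
      rw [Multiset.le_iff_count]
      intro y
      rw [Multiset.count_add, Multiset.count_replicate]
      by_cases hyρ : y = ρ
      · subst hyρ
        rw [if_pos rfl, Multiset.count_singleton,
          if_neg (by exact fun h => absurd (h ▸ hθmem.1) (lt_irrefl _))]
        omega
      · rw [if_neg (fun h => hyρ h.symm), Multiset.count_singleton]
        by_cases hyθ : y = θ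
        · subst hyθ
          rw [if_pos rfl]
          have := Multiset.count_pos.mpr hθmid
          omega
        · rw [if_neg hyθ]
          simp
    have hmidge : μ ≤ Multiset.card ((derivative q).roots.filter (fun r => ρ ≤ r ∧ r < x)) := by
      have := Multiset.card_le_card hle
      rw [Multiset.card_add, Multiset.card_replicate, Multiset.card_singleton] at this
      omega
    omega

/-- A nonzero real polynomial is hyperbolic iff it has a full count of real roots. -/
private lemma hyperbolic_iff_card (q : Polynomial ℝ) (hq : q ≠ 0) :
    Hyperbolic q ↔ Multiset.card q.roots = q.natDegree := by
  have hinj : Function.Injective (algebraMap ℝ ℂ) := (algebraMap ℝ ℂ).injective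
  have hmne : q.map (algebraMap ℝ ℂ) ≠ 0 := Polynomial.map_ne_zero hq
  have hsplits : (q.map (algebraMap ℝ ℂ)).Splits := IsAlgClosed.splits _
  have hcardm : Multiset.card (q.map (algebraMap ℝ ℂ)).roots = q.natDegree := by
    have h1 := Polynomial.Splits.natDegree_eq_card_roots (IsAlgClosed.splits
      (k := ℂ) (q.map (algebraMap ℝ ℂ)))
    rw [Polynomial.natDegree_map] at h1
    omega
  constructor
  · intro hhyp
    have hcount : ∀ a : ℝ, Multiset.count a q.roots =
        Multiset.count ((algebraMap ℝ ℂ) a) (q.map (algebraMap ℝ ℂ)).roots := by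
      intro a
      rw [Polynomial.count_roots, Polynomial.count_roots,
        Polynomial.eq_rootMultiplicity_map hinj]
    have heq : (q.map (algebraMap ℝ ℂ)).roots.map Complex.re = q.roots := by
      ext a
      rw [Multiset.count_map]
      have hfilter : ((q.map (algebraMap ℝ ℂ)).roots.filter (fun z => a = z.re)) =
          ((q.map (algebraMap ℝ ℂ)).roots.filter (fun z => z = (algebraMap ℝ ℂ) a)) := by
        apply Multiset.filter_congr
        intro z hz
        have him : z.im = 0 := hhyp z hz
        constructor
        · intro h
          apply Complex.ext
          · simp [← h]
          · simp [him]
        · intro h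
          rw [h]
          simp
      rw [hfilter, hcount a, Multiset.count_eq_card_filter_eq]
      congr 1
      apply Multiset.filter_congr
      intro z _
      exact eq_comm
    rw [← heq, Multiset.card_map, hcardm]
  · intro hcard
    have hle : q.roots.map (algebraMap ℝ ℂ) ≤ (q.map (algebraMap ℝ ℂ)).roots :=
      Polynomial.map_roots_le hmne
    have hcardeq : Multiset.card ((q.map (algebraMap ℝ ℂ)).roots) ≤
        Multiset.card (q.roots.map (algebraMap ℝ ℂ)) := by
      rw [Multiset.card_map, hcard, hcardm]
    have heq := Multiset.eq_of_le_of_card_le hle hcardeq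
    intro z hz
    rw [← heq] at hz
    obtain ⟨a, _, rfl⟩ := Multiset.mem_map.mp hz
    simp [Complex.ofReal_im]
theorem stmt_2 (n : ℕ) (hn : 1 ≤ n) (w : ℕ → ℝ)
    (hw : ∀ i ∈ Finset.Ico 1 n, w (i + 1) ≤ w i)
    (p P : Polynomial ℝ)
    (hp : p = ∏ k ∈ Finset.Icc 1 n, (X - C (w k)))
    (hP : derivative P = p) :
    (∃ c : ℝ, Hyperbolic (P - C c)) ↔
      (∀ j ∈ Finset.Icc 1 n, ∀ k ∈ Finset.Icc 1 n, Even j → Odd k →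
        (3 : ℤ) ≤ |(j : ℤ) - (k : ℤ)| → P.eval (w k) ≤ P.eval (w j)) := by
  classical
  -- basic facts about p
  have hpmonic : p.Monic := by
    rw [hp]; exact monic_prod_of_monic _ _ fun k _ => monic_X_sub_C _
  have hpne : p ≠ 0 := hpmonic.ne_zero
  have hcard_Icc : (Finset.Icc 1 n).card = n := by rw [Nat.card_Icc]; omega
  have hpdeg : p.natDegree = n := by
    rw [hp, natDegree_prod_of_monic _ _ fun k _ => monic_X_sub_C _]
    rw [Finset.sum_congr rfl fun k _ => natDegree_X_sub_C (w k)]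
    simp [hcard_Icc]
  have hproots : p.roots = (Finset.Icc 1 n).val.map w := by
    have h2 : p = (((Finset.Icc 1 n).val.map w).map fun a => X - C a).prod := by
      rw [hp, Finset.prod_eq_multiset_prod, Multiset.map_map]
      rfl
    rw [h2, roots_multiset_prod_X_sub_C]
  -- monotonicity of w
  have hwm : ∀ i j, 1 ≤ i → i ≤ j → j ≤ n → w j ≤ w i := by
    intro i j hi
    induction j with
    | zero => intro h1 _; omega
    | succ m ihm =>
      intro hij hjn
      rcases Nat.lt_or_ge i (m + 1) with h | h
      · have h1 : w (m + 1) ≤ w m := hw m (by simp [Finset.mem_Ico]; omega)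
        exact h1.trans (ihm (by omega) (by omega))
      · have : i = m + 1 := by omega
        rw [this]
  -- natDegree of P
  have hPne : P ≠ 0 := by
    intro h
    rw [h, derivative_zero] at hP
    exact hpne hP.symm
  have hPdeg0 : P.natDegree ≠ 0 := by
    intro h
    have h2 : derivative P = 0 := by
      rw [Polynomial.eq_C_of_natDegree_eq_zero h]; simp
    rw [hP] at h2; exact hpne h2
  have hPdeg : P.natDegree = n + 1 := by
    have hlow : n < P.natDegree := by
      have := Polynomial.natDegree_derivative_lt hPdeg0
      rw [hP, hpdeg] at this; exact this
    have hup : P.natDegree ≤ n + 1 := by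
      by_contra hcon
      push_neg at hcon
      have hcoef : p.coeff (P.natDegree - 1) =
          P.coeff (P.natDegree - 1 + 1) * ((P.natDegree - 1 : ℕ) + 1 : ℝ) := by
        rw [← hP, Polynomial.coeff_derivative]
      have hne : p.coeff (P.natDegree - 1) ≠ 0 := by
        rw [hcoef]
        apply mul_ne_zero
        · have : P.natDegree - 1 + 1 = P.natDegree := by omega
          rw [this]
          exact Polynomial.leadingCoeff_ne_zero.mpr hPne
        · positivity
      have := Polynomial.le_natDegree_of_ne_zero hne
      rw [hpdeg] at this
      omega
    omega
  have hc1 : P.coeff (n + 1) * ((n : ℝ) + 1) = 1 := by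
    have h1 := Polynomial.coeff_derivative P n
    rw [hP] at h1
    have h2 : p.coeff n = 1 := by
      rw [← hpdeg]; exact hpmonic.coeff_natDegree
    rw [h2] at h1
    exact h1.symm
  have hlcpos : 0 < P.coeff (n + 1) := by
    have hpos : (0 : ℝ) < (n : ℝ) + 1 := by positivity
    nlinarith
  -- facts about Q = P - C c, for any c
  have hQdeg : ∀ c : ℝ, (P - C c).natDegree = n + 1 := fun c => by
    rw [Polynomial.natDegree_sub_C, hPdeg]
  have hQne : ∀ c : ℝ, (P - C c) ≠ 0 := fun c h => by
    have := hQdeg c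
    rw [h, natDegree_zero] at this
    omega
  have hQder : ∀ c : ℝ, derivative (P - C c) = p := fun c => by
    rw [derivative_sub, derivative_C, sub_zero, hP]
  have hQlc : ∀ c : ℝ, (P - C c).leadingCoeff = P.coeff (n + 1) := fun c => by
    rw [Polynomial.leadingCoeff, hQdeg c, Polynomial.coeff_sub, Polynomial.coeff_C,
      if_neg (by omega), sub_zero]
  constructor
  · -- FORWARD
    rintro ⟨c, hc⟩ j hj k hk hje hko _
    simp only [Finset.mem_Icc] at hj hk
    have hQcard : Multiset.card (P - C c).roots = n + 1 := by
      rw [(hyperbolic_iff_card _ (hQne c)).mp hc, hQdeg c]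
    have key : ∀ m, 1 ≤ m → m ≤ n → 0 ≤ (-1 : ℝ) ^ m * ((P - C c).eval (w m)) := by
      intro m hm1 hmn
      by_cases h0 : (P - C c).eval (w m) = 0
      · rw [h0]; simp
      · set Q := P - C c with hQdef
        set x := w m with hxdef
        have hxcount : Q.roots.count x = 0 := by
          rw [Polynomial.count_roots, Polynomial.rootMultiplicity_eq_zero h0]
        -- split of Q.roots
        have hsplitQ : Q.roots = Q.roots.filter (fun r => x < r) +
            Q.roots.filter (fun r => r < x) := by
          ext y
          rw [Multiset.count_add, Multiset.count_filter, Multiset.count_filter]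
          rcases lt_trichotomy x y with h | h | h
          · rw [if_pos h, if_neg (by exact fun hc => absurd (hc.trans h) (lt_irrefl _))]
            omega
          · have hy : Multiset.count y Q.roots = 0 := by rw [← h]; exact hxcount
            rw [if_neg (by intro hh; rw [h] at hh; exact lt_irrefl y hh),
              if_neg (by intro hh; rw [h] at hh; exact lt_irrefl y hh)]
            simp [hy]
          · rw [if_neg (by exact fun hc => absurd (h.trans hc) (lt_irrefl _)), if_pos h]
            omega
        set a := Multiset.card (Q.roots.filter (fun r => x < r)) with hadef
        set a' := Multiset.card (Q.roots.filter (fun r => r < x)) with ha'def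
        have hsum : a + a' = n + 1 := by
          have := congrArg Multiset.card hsplitQ
          rw [Multiset.card_add] at this
          omega
        -- bounds on root counts of p
        have hfiltercard : ∀ pr : ℝ → Prop, ∀ _ : DecidablePred pr,
            Multiset.card (p.roots.filter pr) =
            ((Finset.Icc 1 n).filter (fun i => pr (w i))).card := by
          intro pr hdec
          rw [hproots]
          rw [← Multiset.countP_eq_card_filter, Multiset.countP_map]
          have h9 : ((Finset.Icc 1 n).filter (fun i => pr (w i))).card
              = Multiset.card ((Finset.Icc 1 n).val.filter (fun i => pr (w i))) := by
            rw [← Finset.filter_val]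
            rfl
          rw [h9]
        have hb : Multiset.card (p.roots.filter (fun r => x < r)) ≤ m - 1 := by
          rw [hfiltercard _ _]
          have hsub : (Finset.Icc 1 n).filter (fun i => x < w i) ⊆ Finset.Icc 1 (m - 1) := by
            intro i hi
            simp only [Finset.mem_filter, Finset.mem_Icc] at hi ⊢
            obtain ⟨⟨hi1, hi2⟩, hi3⟩ := hi
            refine ⟨hi1, ?_⟩
            by_contra hcon
            have him : m ≤ i := by omega
            have := hwm m i hm1 him hi2
            rw [← hxdef] at this
            linarith
          have := Finset.card_le_card hsub
          rw [Nat.card_Icc] at this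
          omega
        have hb' : Multiset.card (p.roots.filter (fun r => r < x)) ≤ n - m := by
          rw [hfiltercard _ _]
          have hsub : (Finset.Icc 1 n).filter (fun i => w i < x) ⊆ Finset.Icc (m + 1) n := by
            intro i hi
            simp only [Finset.mem_filter, Finset.mem_Icc] at hi ⊢
            obtain ⟨⟨hi1, hi2⟩, hi3⟩ := hi
            refine ⟨?_, hi2⟩
            by_contra hcon
            have him : i ≤ m := by omega
            have := hwm i m hi1 him hmn
            rw [← hxdef] at this
            linarith
          have := Finset.card_le_card hsub
          rw [Nat.card_Icc] at this
          omega
        -- Rolle counting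
        have hra := (rolle_count a Q x (hQne c) rfl).1
        rw [hQder c] at hra
        have hra' := (rolle_count' a' Q x (hQne c) rfl).1
        rw [hQder c] at hra'
        have ham : a = m := by omega
        -- sign computation
        have hQsplits : Q.Splits :=
          Polynomial.splits_iff_card_roots.mpr (by rw [hQcard, hQdeg c])
        have hfact := Polynomial.Splits.eq_prod_roots hQsplits
        have hev : Q.eval x = Q.leadingCoeff *
            ((Q.roots.map fun r => x - r).prod) := by
          conv_lhs => rw [hfact]
          rw [Polynomial.eval_mul, Polynomial.eval_C, Polynomial.eval_multiset_prod,
            Multiset.map_map]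
          congr 2
          apply Multiset.map_congr rfl
          intro r _
          simp
        have hev2 : Q.eval x = Q.leadingCoeff *
            (((Q.roots.filter (fun r => x < r)).map fun r => x - r).prod *
             ((Q.roots.filter (fun r => r < x)).map fun r => x - r).prod) := by
          rw [hev]
          conv_lhs => rw [hsplitQ]
          rw [Multiset.map_add, Multiset.prod_add]
        have hP2 : 0 ≤ ((Q.roots.filter (fun r => r < x)).map fun r => x - r).prod := by
          apply Multiset.prod_nonneg
          intro u hu
          obtain ⟨r, hr, rfl⟩ := Multiset.mem_map.mp hu
          have := (Multiset.mem_filter.mp hr).2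
          linarith
        have hP1 : 0 ≤ (-1 : ℝ) ^ m *
            ((Q.roots.filter (fun r => x < r)).map fun r => x - r).prod := by
          have hcards : Multiset.card ((Q.roots.filter (fun r => x < r)).map
              fun r => x - r) = m := by
            rw [Multiset.card_map, ← hadef, ham]
          rw [← hcards]
          apply neg_prod_sign
          intro u hu
          obtain ⟨r, hr, rfl⟩ := Multiset.mem_map.mp hu
          have := (Multiset.mem_filter.mp hr).2
          linarith
        have hexpand : (-1 : ℝ) ^ m * Q.eval x = Q.leadingCoeff *
            ((-1 : ℝ) ^ m * ((Q.roots.filter (fun r => x < r)).map fun r => x - r).prod) *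
            ((Q.roots.filter (fun r => r < x)).map fun r => x - r).prod := by
          rw [hev2]; ring
        rw [hexpand, hQlc c]
        exact mul_nonneg (mul_nonneg hlcpos.le hP1) hP2
    have h1 := key j hj.1 hj.2
    have h2 := key k hk.1 hk.2
    rw [hje.neg_one_pow, one_mul] at h1
    rw [hko.neg_one_pow] at h2
    simp only [Polynomial.eval_sub, Polynomial.eval_C] at h1 h2
    linarith
  · -- BACKWARD
    intro hRHS
    -- adjacent comparison lemma via monotonicity
    have hadj : ∀ m, 1 ≤ m → m + 1 ≤ n →
        (Odd m → P.eval (w m) ≤ P.eval (w (m + 1))) ∧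
        (Even m → P.eval (w (m + 1)) ≤ P.eval (w m)) := by
      intro m hm1 hmn
      have hle : w (m + 1) ≤ w m := hw m (by simp [Finset.mem_Ico]; omega)
      have hsign : ∀ x ∈ Set.Icc (w (m + 1)) (w m), 0 ≤ (-1 : ℝ) ^ m * p.eval x := by
        intro x hx
        obtain ⟨hx1, hx2⟩ := hx
        have hsplit : Finset.Icc 1 n = Finset.Icc 1 m ∪ Finset.Icc (m + 1) n := by
          ext t; simp only [Finset.mem_Icc, Finset.mem_union]; omega
        have hdisj : Disjoint (Finset.Icc 1 m) (Finset.Icc (m + 1) n) := by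
          rw [Finset.disjoint_left]
          intro t ht1 ht2
          simp only [Finset.mem_Icc] at ht1 ht2
          omega
        have hev : p.eval x = (∏ i ∈ Finset.Icc 1 m, (x - w i)) *
            ∏ i ∈ Finset.Icc (m + 1) n, (x - w i) := by
          rw [hp, hsplit, Finset.prod_union hdisj, Polynomial.eval_mul,
            Polynomial.eval_prod, Polynomial.eval_prod]
          simp
        have h1 : (∏ i ∈ Finset.Icc 1 m, (x - w i)) =
            (-1 : ℝ) ^ m * ∏ i ∈ Finset.Icc 1 m, (w i - x) := by
          calc (∏ i ∈ Finset.Icc 1 m, (x - w i))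
              = ∏ i ∈ Finset.Icc 1 m, ((-1) * (w i - x)) := by
                apply Finset.prod_congr rfl; intros; ring
            _ = (∏ _i ∈ Finset.Icc 1 m, (-1 : ℝ)) * ∏ i ∈ Finset.Icc 1 m, (w i - x) :=
                Finset.prod_mul_distrib
            _ = (-1 : ℝ) ^ m * ∏ i ∈ Finset.Icc 1 m, (w i - x) := by
                rw [Finset.prod_const, Nat.card_Icc]
                norm_num
        have h2 : 0 ≤ ∏ i ∈ Finset.Icc 1 m, (w i - x) := by
          apply Finset.prod_nonneg
          intro i hi
          simp only [Finset.mem_Icc] at hi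
          have h3 : w m ≤ w i := hwm i m hi.1 hi.2 (by omega)
          linarith
        have h3 : 0 ≤ ∏ i ∈ Finset.Icc (m + 1) n, (x - w i) := by
          apply Finset.prod_nonneg
          intro i hi
          simp only [Finset.mem_Icc] at hi
          have h4 : w i ≤ w (m + 1) := hwm (m + 1) i (by omega) hi.1 hi.2
          linarith
        have hsq : (-1 : ℝ) ^ m * (-1 : ℝ) ^ m = 1 := by
          rw [← pow_add]
          exact Even.neg_one_pow ⟨m, by ring⟩
        have hfin : (-1 : ℝ) ^ m * p.eval x = ((-1 : ℝ) ^ m * (-1 : ℝ) ^ m) *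
            ((∏ i ∈ Finset.Icc 1 m, (w i - x)) * ∏ i ∈ Finset.Icc (m + 1) n, (x - w i)) := by
          rw [hev, h1]; ring
        rw [hfin, hsq, one_mul]
        exact mul_nonneg h2 h3
      constructor
      · intro hodd
        have hanti : AntitoneOn (fun y => P.eval y) (Set.Icc (w (m + 1)) (w m)) := by
          apply antitoneOn_of_deriv_nonpos (convex_Icc _ _)
          · exact (Polynomial.continuous P).continuousOn
          · exact (Polynomial.differentiable P).differentiableOn
          · intro y hy
            rw [Polynomial.deriv, hP]
            rw [interior_Icc] at hy
            have := hsign y (Set.Ioo_subset_Icc_self hy)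
            rw [hodd.neg_one_pow] at this
            linarith
        exact hanti ⟨le_refl _, hle⟩ ⟨hle, le_refl _⟩ hle
      · intro heven
        have hmono : MonotoneOn (fun y => P.eval y) (Set.Icc (w (m + 1)) (w m)) := by
          apply monotoneOn_of_deriv_nonneg (convex_Icc _ _)
          · exact (Polynomial.continuous P).continuousOn
          · exact (Polynomial.differentiable P).differentiableOn
          · intro y hy
            rw [Polynomial.deriv, hP]
            rw [interior_Icc] at hy
            have := hsign y (Set.Ioo_subset_Icc_self hy)
            rw [heven.neg_one_pow, one_mul] at this
            linarith
        exact hmono ⟨le_refl _, hle⟩ ⟨hle, le_refl _⟩ hle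
    -- every odd critical value is below every even critical value
    have hkey : ∀ k, 1 ≤ k → k ≤ n → ∀ j, 1 ≤ j → j ≤ n → Odd k → Even j →
        P.eval (w k) ≤ P.eval (w j) := by
      intro k hk1 hkn j hj1 hjn hok hej
      rcases lt_trichotomy j k with h | h | h
      · by_cases hc1 : k = j + 1
        · subst hc1
          exact (hadj j hj1 (by omega)).2 hej
        · apply hRHS j (by simp [Finset.mem_Icc]; omega) k (by simp [Finset.mem_Icc]; omega)
            hej hok
          obtain ⟨b, hb⟩ := hej
          obtain ⟨a, ha⟩ := hok
          refine le_abs.mpr (Or.inr ?_)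
          omega
      · exfalso
        rw [h] at hej
        exact (Nat.not_odd_iff_even.mpr hej) hok
      · by_cases hc1 : j = k + 1
        · subst hc1
          exact (hadj k hk1 (by omega)).1 hok
        · apply hRHS j (by simp [Finset.mem_Icc]; omega) k (by simp [Finset.mem_Icc]; omega)
            hej hok
          obtain ⟨b, hb⟩ := hej
          obtain ⟨a, ha⟩ := hok
          refine le_abs.mpr (Or.inl ?_)
          omega
    -- choose the constant c
    have h1mem : 1 ∈ (Finset.Icc 1 n).filter (fun k => Odd k) := by
      simp only [Finset.mem_filter, Finset.mem_Icc]
      exact ⟨⟨le_refl 1, hn⟩, odd_one⟩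
    have hOne : ((Finset.Icc 1 n).filter (fun k => Odd k)).Nonempty := ⟨1, h1mem⟩
    set c := ((Finset.Icc 1 n).filter (fun k => Odd k)).sup' hOne (fun k => P.eval (w k))
      with hcdef
    have hub : ∀ k, 1 ≤ k → k ≤ n → Odd k → P.eval (w k) ≤ c := by
      intro k h1 h2 h3
      rw [hcdef]
      exact Finset.le_sup' (fun k => P.eval (w k))
        (Finset.mem_filter.mpr ⟨Finset.mem_Icc.mpr ⟨h1, h2⟩, h3⟩)
    have hlb : ∀ j, 1 ≤ j → j ≤ n → Even j → c ≤ P.eval (w j) := by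
      intro j h1 h2 h3
      rw [hcdef]
      apply Finset.sup'_le
      intro k hkO
      simp only [Finset.mem_filter, Finset.mem_Icc] at hkO
      exact hkey k hkO.1.1 hkO.1.2 j h1 h2 hkO.2 h3
    refine ⟨c, ?_⟩
    set Q := P - C c with hQdef
    have hyp1 : ∀ k, 1 ≤ k → k ≤ n → Odd k → Q.eval (w k) ≤ 0 := by
      intro k h1 h2 h3
      rw [hQdef, Polynomial.eval_sub, Polynomial.eval_C, sub_nonpos]
      exact hub k h1 h2 h3
    have hyp2 : ∀ j, 1 ≤ j → j ≤ n → Even j → 0 ≤ Q.eval (w j) := by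
      intro j h1 h2 h3
      rw [hQdef, Polynomial.eval_sub, Polynomial.eval_C, sub_nonneg]
      exact hlb j h1 h2 h3
    -- repeated critical points force zeros of Q
    have hz : ∀ k, 1 ≤ k → k ≤ n → (∀ jj, 1 ≤ jj → jj < k → w jj = w k → Q.eval (w k) = 0) := by
      intro k hk1 hkn jj hj1 hjk hjw
      have hj2 : w k ≤ w (jj + 1) := hwm (jj + 1) k (by omega) (by omega) hkn
      have hj3 : w (jj + 1) ≤ w jj := hw jj (by simp [Finset.mem_Ico]; omega)
      have hjj : w (jj + 1) = w jj := le_antisymm hj3 (by rw [← hjw] at hj2; exact hj2)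
      rcases Nat.even_or_odd jj with he | ho
      · have a1 := hyp2 jj hj1 (by omega) he
        have a2 := hyp1 (jj + 1) (by omega) (by omega) (Even.add_one he)
        rw [hjj] at a2
        have h5 : Q.eval (w jj) = 0 := le_antisymm a2 a1
        rw [← hjw]; exact h5
      · have a1 := hyp1 jj hj1 (by omega) ho
        have a2 := hyp2 (jj + 1) (by omega) (by omega) (Odd.add_one ho)
        rw [hjj] at a2
        have h5 : Q.eval (w jj) = 0 := le_antisymm a1 a2
        rw [← hjw]; exact h5
    -- multiplicity of forced zeros
    have hmc : ∀ k, 1 ≤ k → k ≤ n → Q.eval (w k) = 0 →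
        Q.roots.count (w k) = p.roots.count (w k) + 1 := by
      intro k h1 h2 h0
      have hroot : Q.IsRoot (w k) := h0
      rw [Polynomial.count_roots, Polynomial.count_roots, ← hQder c,
        Polynomial.derivative_rootMultiplicity_of_root hroot]
      have h3 : 0 < Q.rootMultiplicity (w k) :=
        (Polynomial.rootMultiplicity_pos (hQne c)).mpr hroot
      omega
    -- count of a value among the roots of p
    have hpcount : ∀ x : ℝ, p.roots.count x =
        ((Finset.Icc 1 n).filter (fun i => x = w i)).card := by
      intro x
      rw [hproots, Multiset.count_map]
      have h9 : ((Finset.Icc 1 n).filter (fun i => x = w i)).card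
          = Multiset.card ((Finset.Icc 1 n).val.filter (fun i => x = w i)) := by
        rw [← Finset.filter_val]; rfl
      rw [h9]
    -- IVT helpers
    have hIVT : ∀ a b : ℝ, a < b → Q.eval a < 0 → 0 < Q.eval b →
        ∃ r, a < r ∧ r < b ∧ r ∈ Q.roots := by
      intro a b hab ha hb
      have h0 : (0 : ℝ) ∈ Set.Ioo (Q.eval a) (Q.eval b) := ⟨ha, hb⟩
      obtain ⟨r, hr, hr0⟩ := intermediate_value_Ioo hab.le
        ((Polynomial.continuous Q).continuousOn) h0
      exact ⟨r, hr.1, hr.2, (Polynomial.mem_roots (hQne c)).mpr hr0⟩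
    have hIVT' : ∀ a b : ℝ, a < b → 0 < Q.eval a → Q.eval b < 0 →
        ∃ r, a < r ∧ r < b ∧ r ∈ Q.roots := by
      intro a b hab ha hb
      have h0 : (0 : ℝ) ∈ Set.Ioo (Q.eval b) (Q.eval a) := ⟨hb, ha⟩
      obtain ⟨r, hr, hr0⟩ := intermediate_value_Ioo' hab.le
        ((Polynomial.continuous Q).continuousOn) h0
      exact ⟨r, hr.1, hr.2, (Polynomial.mem_roots (hQne c)).mpr hr0⟩
    have hQdegpos : 0 < Q.degree := by
      rw [Polynomial.degree_eq_natDegree (hQne c), hQdeg c]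
      exact_mod_cast Nat.succ_pos n
    -- main root-counting claim
    have Hcl : ∀ k, 1 ≤ k → k ≤ n →
        k + (if Q.eval (w k) = 0 then 1 else 0) ≤
          Multiset.card (Q.roots.filter (fun r => w k ≤ r)) := by
      intro k
      induction k using Nat.strong_induction_on with
      | _ k ih =>
      intro hk1 hkn
      by_cases h0 : Q.eval (w k) = 0
      · rw [if_pos h0]
        by_cases htop : w 1 = w k
        · have hsub : Finset.Icc 1 k ⊆ (Finset.Icc 1 n).filter (fun i => w k = w i) := by
            intro i hi
            simp only [Finset.mem_Icc, Finset.mem_filter] at hi ⊢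
            refine ⟨⟨hi.1, by omega⟩, ?_⟩
            have ha1 : w k ≤ w i := hwm i k hi.1 hi.2 hkn
            have ha2 : w i ≤ w 1 := hwm 1 i (le_refl 1) hi.1 (by omega)
            rw [htop] at ha2
            exact le_antisymm ha1 ha2
          have hcnt : k + 1 ≤ Q.roots.count (w k) := by
            rw [hmc k hk1 hkn h0, hpcount]
            have := Finset.card_le_card hsub
            rw [Nat.card_Icc] at this
            omega
          calc k + 1 ≤ Q.roots.count (w k) := hcnt
            _ = (Q.roots.filter (fun r => w k ≤ r)).count (w k) := by
                rw [Multiset.count_filter, if_pos (le_refl _)]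
            _ ≤ Multiset.card (Q.roots.filter (fun r => w k ≤ r)) :=
                Multiset.count_le_card _ _
        · have hPred : ∃ jj, 1 ≤ jj ∧ w jj = w k := ⟨k, hk1, rfl⟩
          have hk₀1 := (Nat.find_spec hPred).1
          have hk₀w := (Nat.find_spec hPred).2
          have hk₀le : Nat.find hPred ≤ k := Nat.find_le ⟨hk1, rfl⟩
          set k₀ := Nat.find hPred with hk₀def
          have hk₀2 : 2 ≤ k₀ := by
            rcases Nat.lt_or_ge k₀ 2 with h | h
            · have hone : k₀ = 1 := by omega
              rw [hone] at hk₀w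
              exact absurd hk₀w htop
            · exact h
          have hprev : ¬(1 ≤ k₀ - 1 ∧ w (k₀ - 1) = w k) := Nat.find_min hPred (by omega)
          have hprevne : w (k₀ - 1) ≠ w k := fun h => hprev ⟨by omega, h⟩
          have hprevge : w k ≤ w (k₀ - 1) := hwm (k₀ - 1) k (by omega) (by omega) hkn
          have hprevgt : w k < w (k₀ - 1) := lt_of_le_of_ne hprevge (Ne.symm hprevne)
          have hIH := ih (k₀ - 1) (by omega) (by omega) (by omega)
          have hIH' : k₀ - 1 ≤ Multiset.card (Q.roots.filter (fun r => w (k₀ - 1) ≤ r)) :=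
            le_trans (Nat.le_add_right _ _) hIH
          have hsplit := filter_split_ge Q.roots (w k) (w (k₀ - 1)) hprevgt.le
          have hcards := congrArg Multiset.card hsplit
          rw [Multiset.card_add] at hcards
          have hpge : k - k₀ + 1 ≤ p.roots.count (w k) := by
            rw [hpcount]
            have hsub : Finset.Icc k₀ k ⊆ (Finset.Icc 1 n).filter (fun i => w k = w i) := by
              intro i hi
              simp only [Finset.mem_Icc, Finset.mem_filter] at hi ⊢
              refine ⟨⟨by omega, by omega⟩, ?_⟩
              have ha1 : w k ≤ w i := hwm i k (by omega) hi.2 hkn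
              have ha2 : w i ≤ w k₀ := hwm k₀ i (by omega) hi.1 (by omega)
              rw [hk₀w] at ha2
              exact le_antisymm ha1 ha2
            have := Finset.card_le_card hsub
            rw [Nat.card_Icc] at this
            omega
          have hmidge : k - k₀ + 2 ≤
              Multiset.card (Q.roots.filter (fun r => w k ≤ r ∧ r < w (k₀ - 1))) := by
            have hcnt : (Q.roots.filter (fun r => w k ≤ r ∧ r < w (k₀ - 1))).count (w k) =
                Q.roots.count (w k) := by
              rw [Multiset.count_filter, if_pos ⟨le_refl _, hprevgt⟩]
            have h5 := hmc k hk1 hkn h0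
            have h6 := Multiset.count_le_card (w k)
              (Q.roots.filter (fun r => w k ≤ r ∧ r < w (k₀ - 1)))
            omega
          omega
      · rw [if_neg h0]
        rcases eq_or_lt_of_le hk1 with h1 | h1
        · -- k = 1
          have hodd1 : Q.eval (w k) < 0 :=
            lt_of_le_of_ne (hyp1 k (by omega) hkn (by rw [← h1]; exact odd_one)) h0
          have htend := Polynomial.tendsto_atTop_of_leadingCoeff_nonneg Q hQdegpos
            (by rw [hQlc c]; exact hlcpos.le)
          obtain ⟨M, hM1, hM2⟩ := ((htend.eventually_gt_atTop 0).and
            (Filter.eventually_gt_atTop (w k))).exists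
          obtain ⟨r, hr1, hr2, hr3⟩ := hIVT (w k) M hM2 hodd1 hM1
          have hmem : r ∈ Q.roots.filter (fun r => w k ≤ r) :=
            Multiset.mem_filter.mpr ⟨hr3, hr1.le⟩
          have := Multiset.card_pos_iff_exists_mem.mpr ⟨r, hmem⟩
          omega
        · -- 2 ≤ k
          have hne : w (k - 1) ≠ w k := fun h => h0 (hz k hk1 hkn (k - 1) (by omega) (by omega) h)
          have hge : w k ≤ w (k - 1) := hwm (k - 1) k (by omega) (by omega) hkn
          have hgt : w k < w (k - 1) := lt_of_le_of_ne hge (Ne.symm hne)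
          have hIH := ih (k - 1) (by omega) (by omega) (by omega)
          have hsplit := filter_split_ge Q.roots (w k) (w (k - 1)) hgt.le
          have hcards := congrArg Multiset.card hsplit
          rw [Multiset.card_add] at hcards
          by_cases h0' : Q.eval (w (k - 1)) = 0
          · rw [if_pos h0'] at hIH
            omega
          · rw [if_neg h0'] at hIH
            have hroot : ∃ r ∈ Q.roots, w k < r ∧ r < w (k - 1) := by
              rcases Nat.even_or_odd k with he | ho
              · have ha : 0 < Q.eval (w k) := lt_of_le_of_ne (hyp2 k hk1 hkn he) (Ne.symm h0)
                have hoprev : Odd (k - 1) := by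
                  obtain ⟨t, ht⟩ := he
                  exact ⟨t - 1, by omega⟩
                have hb : Q.eval (w (k - 1)) < 0 :=
                  lt_of_le_of_ne (hyp1 (k - 1) (by omega) (by omega) hoprev) h0'
                obtain ⟨r, hr1, hr2, hr3⟩ := hIVT' (w k) (w (k - 1)) hgt ha hb
                exact ⟨r, hr3, hr1, hr2⟩
              · have ha : Q.eval (w k) < 0 := lt_of_le_of_ne (hyp1 k hk1 hkn ho) h0
                have heprev : Even (k - 1) := by
                  obtain ⟨t, ht⟩ := ho
                  exact ⟨t, by omega⟩
                have hb : 0 < Q.eval (w (k - 1)) :=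
                  lt_of_le_of_ne (hyp2 (k - 1) (by omega) (by omega) heprev) (Ne.symm h0')
                obtain ⟨r, hr1, hr2, hr3⟩ := hIVT (w k) (w (k - 1)) hgt ha hb
                exact ⟨r, hr3, hr1, hr2⟩
            obtain ⟨r, hrroots, hr1, hr2⟩ := hroot
            have hmem : r ∈ Q.roots.filter (fun r => w k ≤ r ∧ r < w (k - 1)) :=
              Multiset.mem_filter.mpr ⟨hrroots, hr1.le, hr2⟩
            have hmidpos := Multiset.card_pos_iff_exists_mem.mpr ⟨r, hmem⟩
            omega
    -- conclude: Q has at least n+1 real roots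
    have hfinal : n + 1 ≤ Multiset.card Q.roots := by
      have hN := Hcl n hn (le_refl n)
      have hsplitall : Q.roots = Q.roots.filter (fun r => w n ≤ r) +
          Q.roots.filter (fun r => ¬ w n ≤ r) := (Multiset.filter_add_not _ _).symm
      have hcards := congrArg Multiset.card hsplitall
      rw [Multiset.card_add] at hcards
      by_cases h0 : Q.eval (w n) = 0
      · rw [if_pos h0] at hN
        omega
      · rw [if_neg h0] at hN
        -- a root strictly below w n
        set R := Q.comp (-X) with hRdef
        have hRdeg : R.natDegree = n + 1 := by
          rw [hRdef, Polynomial.natDegree_comp, hQdeg c]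
          simp
        have hRne : R ≠ 0 := by
          intro h
          rw [h, natDegree_zero] at hRdeg
          omega
        have hRdegpos : 0 < R.degree := by
          rw [Polynomial.degree_eq_natDegree hRne, hRdeg]
          exact_mod_cast Nat.succ_pos n
        have hReval : ∀ y : ℝ, R.eval y = Q.eval (-y) := by
          intro y
          rw [hRdef, Polynomial.eval_comp]
          simp
        have hRlc : R.leadingCoeff = Q.leadingCoeff * (-1 : ℝ) ^ (n + 1) := by
          rw [hRdef, Polynomial.leadingCoeff_comp (by simp)]
          rw [hQdeg c]
          congr 1
          simp [Polynomial.leadingCoeff]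
        have hroot : ∃ r, r < w n ∧ r ∈ Q.roots := by
          rcases Nat.even_or_odd n with he | ho
          · have ha : 0 < Q.eval (w n) := lt_of_le_of_ne (hyp2 n hn (le_refl n) he) (Ne.symm h0)
            have hlcR : R.leadingCoeff ≤ 0 := by
              rw [hRlc, Odd.neg_one_pow (Even.add_one he), hQlc c]
              nlinarith
            have htend := Polynomial.tendsto_atBot_of_leadingCoeff_nonpos R hRdegpos hlcR
            obtain ⟨M, hM1, hM2⟩ := ((htend.eventually_lt_atBot 0).and
              (Filter.eventually_gt_atTop (-(w n)))).exists
            rw [hReval] at hM1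
            obtain ⟨r, hr1, hr2, hr3⟩ := hIVT (-M) (w n) (by linarith) hM1 ha
            exact ⟨r, hr2, hr3⟩
          · have ha : Q.eval (w n) < 0 := lt_of_le_of_ne (hyp1 n hn (le_refl n) ho) h0
            have hlcR : 0 ≤ R.leadingCoeff := by
              rw [hRlc, Even.neg_one_pow (Odd.add_one ho), hQlc c]
              nlinarith
            have htend := Polynomial.tendsto_atTop_of_leadingCoeff_nonneg R hRdegpos hlcR
            obtain ⟨M, hM1, hM2⟩ := ((htend.eventually_gt_atTop 0).and
              (Filter.eventually_gt_atTop (-(w n)))).exists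
            rw [hReval] at hM1
            obtain ⟨r, hr1, hr2, hr3⟩ := hIVT' (-M) (w n) (by linarith) hM1 ha
            exact ⟨r, hr2, hr3⟩
        obtain ⟨r, hr1, hr2⟩ := hroot
        have hmem : r ∈ Q.roots.filter (fun r => ¬ w n ≤ r) :=
          Multiset.mem_filter.mpr ⟨hr2, not_le.mpr hr1⟩
        have := Multiset.card_pos_iff_exists_mem.mpr ⟨r, hmem⟩
        omega
    have hle := Polynomial.card_roots' Q
    rw [hQdeg c] at hle
    apply (hyperbolic_iff_card Q (hQne c)).mpr
    rw [hQdeg c]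
    omega
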